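/- Run Phragmén's rule on an approval profile and let ℓ_i(t) denote the load of voter i after t steps. Let N' ⊆ N be a group of voters with |N'| = n' and suppose that after step k some alternative approved by all voters of N' is still unranked. Then Σ_{i∈N'} ℓ_i(k) ≥ n'·k/n − 1. -/
import Mathlib


open Finset

/-- The set of the top `k` alternatives of the ranking `r`
(where `r j` is the alternative at position `j`). -/
def topk {m : ℕ} (r : Fin m ≃ Fin m) (k : ℕ) : Finset (Fin m) :=
  Finset.univ.filter fun a => (r.symm a : ℕ) < k

/-- Average representation of the group `N'` with respect to the set `S`. -/
def avgRep {n m : ℕ} (App : Fin n → Finset (Fin m)) (N' : Finset (Fin n))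
    (S : Finset (Fin m)) : ℚ :=
  (∑ i ∈ N', ((App i ∩ S).card : ℚ)) / (N'.card : ℚ)

/-- `N'` is `(α, λ)`-significant: it has `⌈αn⌉` members and cohesiveness at least `λ`. -/
def Significant {n m : ℕ} (App : Fin n → Finset (Fin m)) (α : ℚ) (lam : ℕ)
    (N' : Finset (Fin n)) : Prop :=
  (N'.card : ℤ) = ⌈α * (n : ℚ)⌉ ∧ lam ≤ (N'.inf App).card

/-- `load` is a valid execution trace of Phragmén's rule producing the ranking `r`:
`load t i` is the load of voter `i` after `t` steps. At step `t+1` (which ranks the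
alternative `r t` at position `t`), one unit of load is distributed among the approvers
of `r t`, and the chosen alternative together with its load distribution minimizes the
resulting maximum voter load among all still-unranked alternatives and all valid
distributions for them. -/
def IsPhragmenExec {n m : ℕ} (App : Fin n → Finset (Fin m)) (r : Fin m ≃ Fin m)
    (load : ℕ → Fin n → ℚ) : Prop :=
  (∀ i, load 0 i = 0) ∧
  (∀ t : Fin m, ∀ i, load (t : ℕ) i ≤ load ((t : ℕ) + 1) i) ∧
  (∀ t : Fin m, ∀ i, load ((t : ℕ) + 1) i ≠ load (t : ℕ) i → r t ∈ App i) ∧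
  (∀ t : Fin m, ∑ i, (load ((t : ℕ) + 1) i - load (t : ℕ) i) = 1) ∧
  (∀ t : Fin m, ∀ b : Fin m, (t : ℕ) ≤ (r.symm b : ℕ) →
    ∀ δ : Fin n → ℚ, (∀ i, 0 ≤ δ i) → (∀ i, δ i ≠ 0 → b ∈ App i) → (∑ i, δ i) = 1 →
      ∀ i, ∃ j, load ((t : ℕ) + 1) i ≤ load (t : ℕ) j + δ j)

theorem phragmen_load_sum_lower_bound
    {n m : ℕ} (App : Fin n → Finset (Fin m)) (hApp : ∀ i, (App i).Nonempty)
    (r : Fin m ≃ Fin m) (load : ℕ → Fin n → ℚ)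
    (hexec : IsPhragmenExec App r load)
    (k : ℕ) (hk : k ≤ m) (N' : Finset (Fin n))
    (hunranked : ∃ h : Fin m, (∀ i ∈ N', h ∈ App i) ∧ k ≤ (r.symm h : ℕ)) :
    (N'.card : ℚ) * (k : ℚ) / (n : ℚ) - 1 ≤ ∑ i ∈ N', load k i := by
  classical
  obtain ⟨h, hh1, hh2⟩ := hunranked
  obtain ⟨h0, hmono, happ, hsum, hopt⟩ := hexec
  have hkm : k < m := lt_of_le_of_lt hh2 (r.symm h).isLt
  -- monotonicity of loads
  have hmono' : ∀ s s' : ℕ, s ≤ s' → s' ≤ m → ∀ i, load s i ≤ load s' i := by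
    intro s s' hss hsm i
    induction s' with
    | zero =>
      have : s = 0 := Nat.le_zero.mp hss
      simp [this]
    | succ t ih =>
      have htm : t < m := lt_of_lt_of_le (Nat.lt_succ_self t) hsm
      rcases Nat.lt_or_ge s (t+1) with hlt | hge
      · exact le_trans (ih (Nat.lt_succ_iff.mp hlt) (le_of_lt htm)) (hmono ⟨t, htm⟩ i)
      · have hst : s = t + 1 := le_antisymm hss hge
        simp [hst]
  -- total load after s steps is s
  have htot : ∀ s : ℕ, s ≤ m → (∑ i, load s i) = (s : ℚ) := by
    intro s hsm
    induction s with
    | zero => simp [h0]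
    | succ t ih =>
      have htm : t < m := lt_of_lt_of_le (Nat.lt_succ_self t) hsm
      have := hsum ⟨t, htm⟩
      simp only [Fin.val_mk] at this
      have h1 : (∑ i, (load (t+1) i - load t i)) = (∑ i, load (t+1) i) - ∑ i, load t i := by
        rw [Finset.sum_sub_distrib]
      rw [h1, ih (le_of_lt htm)] at this
      push_cast
      linarith
  rcases Finset.eq_empty_or_nonempty N' with hN | hN
  · subst hN
    simp only [Finset.card_empty, Finset.sum_empty]
    norm_num
  obtain ⟨i0, hi0⟩ := hN
  have hn : 0 < n := by
    have := i0.isLt; omega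
  haveI : Nonempty (Fin n) := ⟨i0⟩
  rcases Nat.eq_zero_or_pos k with hk0 | hkpos
  · subst hk0
    simp [h0]
  -- the maximum load after k steps
  set L : ℚ := Finset.univ.sup' (Finset.univ_nonempty) (fun i => load k i) with hL
  have hmaxge : ∀ i, load k i ≤ L := fun i => Finset.le_sup' _ (Finset.mem_univ i)
  have hkL : (k : ℚ) ≤ n * L := by
    calc (k : ℚ) = ∑ i, load k i := (htot k hk).symm
    _ ≤ ∑ _i : Fin n, L := Finset.sum_le_sum fun i _ => hmaxge i
    _ = n * L := by simp [mul_comm]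
  have hLpos : 0 < L := by
    have : (0:ℚ) < (k:ℚ) := by exact_mod_cast hkpos
    nlinarith [this, hkL, (show (0:ℚ) < (n:ℚ) by exact_mod_cast hn)]
  -- first time some voter's load reaches L
  have hPk : ∃ i, L ≤ load k i := by
    obtain ⟨i, _, hi⟩ := Finset.exists_mem_eq_sup' (Finset.univ_nonempty) (fun i => load k i)
    exact ⟨i, le_of_eq hi⟩
  have hPex : ∃ s : ℕ, ∃ i, L ≤ load s i := ⟨k, hPk⟩
  set t := Nat.find hPex with ht
  have htspec : ∃ i, L ≤ load t i := Nat.find_spec hPex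
  have htk : t ≤ k := Nat.find_le hPk
  have htpos : 0 < t := by
    rcases Nat.eq_zero_or_pos t with h' | h'
    · obtain ⟨i, hi⟩ := htspec
      rw [h', h0] at hi
      exact absurd hi (not_le.mpr hLpos)
    · exact h'
  set u := t - 1 with hu
  have hut : u + 1 = t := Nat.succ_pred_eq_of_pos htpos
  have hnotPu : ¬ ∃ i, L ≤ load u i := Nat.find_min hPex (by omega)
  have hlt : ∀ j, load u j < L := by
    intro j
    by_contra hc
    exact hnotPu ⟨j, le_of_not_gt hc⟩
  have hum : u < m := by omega
  -- the alternative distribution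
  set C : ℚ := ∑ j ∈ N', (L - load u j) with hC
  have hCpos : 0 < C := Finset.sum_pos (fun j hj => sub_pos.mpr (hlt j)) ⟨i0, hi0⟩
  set δ : Fin n → ℚ := fun j => if j ∈ N' then (L - load u j) / C else 0 with hδ
  have hδ0 : ∀ i, 0 ≤ δ i := by
    intro i
    simp only [hδ]
    split
    · exact div_nonneg (le_of_lt (sub_pos.mpr (hlt i))) (le_of_lt hCpos)
    · exact le_refl 0
  have hδapp : ∀ i, δ i ≠ 0 → h ∈ App i := by
    intro i hi
    simp only [hδ] at hi
    by_cases hmem : i ∈ N'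
    · exact hh1 i hmem
    · simp [hmem] at hi
  have hδsum : (∑ i, δ i) = 1 := by
    simp only [hδ]
    rw [Finset.sum_ite_mem, Finset.univ_inter, ← Finset.sum_div, ← hC, div_self (ne_of_gt hCpos)]
  obtain ⟨it, hit⟩ := htspec
  obtain ⟨j, hj⟩ := hopt ⟨u, hum⟩ h (by simp; omega) δ hδ0 hδapp hδsum it
  simp only [Fin.val_mk] at hj
  rw [hut] at hj
  have hLj : L ≤ load u j + δ j := le_trans hit hj
  have hjN : j ∈ N' := by
    by_contra hc
    have : δ j = 0 := by simp [hδ, hc]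
    rw [this, add_zero] at hLj
    exact absurd hLj (not_le.mpr (hlt j))
  have hC1 : C ≤ 1 := by
    have hx : 0 < L - load u j := sub_pos.mpr (hlt j)
    have : L - load u j ≤ (L - load u j) / C := by
      simp [hδ, hjN] at hLj
      linarith
    rw [le_div_iff₀ hCpos] at this
    exact (mul_le_iff_le_one_right hx).mp this
  -- conclude
  have hCeq : C = (N'.card : ℚ) * L - ∑ j ∈ N', load u j := by
    rw [hC, Finset.sum_sub_distrib]
    simp [mul_comm]
  have hsk : ∑ j ∈ N', load u j ≤ ∑ j ∈ N', load k j :=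
    Finset.sum_le_sum fun j _ => hmono' u k (by omega) hk j
  have hfin : (N'.card : ℚ) * L ≤ (∑ j ∈ N', load k j) + 1 := by
    rw [hCeq] at hC1; linarith
  have hnq : (0:ℚ) < (n:ℚ) := by exact_mod_cast hn
  have hcard : (0:ℚ) ≤ (N'.card : ℚ) := Nat.cast_nonneg _
  have hkn : (k : ℚ) / n ≤ L := by
    rw [div_le_iff₀ hnq]; linarith [hkL]
  have : (N'.card : ℚ) * ((k:ℚ)/n) ≤ (N'.card : ℚ) * L := by
    exact mul_le_mul_of_nonneg_left hkn hcard
  rw [mul_div_assoc]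
  linarith
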